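/- Given three points x₀, x₁, x₂ ∈ ℝ³ that are affinely independent, there exists a unique pair (A, D) with A ∈ SO(3) and D ∈ ℝ³ such that A·x₀ + D = (0,0,0), A·x₁ + D = (L₁, 0, 0), and A·x₂ + D = (L₂ cos θ, L₂ sin θ, 0), where L₁ = ‖x₁ − x₀‖, L₂ = ‖x₂ − x₀‖, and θ ∈ (0, π) is the angle between x₁ − x₀ and x₂ − x₀. -/

import Mathlib

open Matrix
open scoped Matrix

lemma CA.dot_self_pos {v : Fin 3 → ℝ} (hv : v ≠ 0) : 0 < v ⬝ᵥ v := by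
  have h0 : v ⬝ᵥ v ≠ 0 := fun h => hv (dotProduct_self_eq_zero.mp h)
  have hnn : 0 ≤ v ⬝ᵥ v := by
    rw [show v ⬝ᵥ v = ∑ i, v i * v i from rfl]
    exact Finset.sum_nonneg fun i _ => mul_self_nonneg _
  exact lt_of_le_of_ne hnn (Ne.symm h0)

lemma CA.rows_mul (M : Matrix (Fin 3) (Fin 3) ℝ) (p q r : Fin 3 → ℝ) :
    (Matrix.of ![p, q, r]) * Mᵀ = Matrix.of ![M *ᵥ p, M *ᵥ q, M *ᵥ r] := by
  ext i j
  fin_cases i <;>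
    simp [Matrix.mul_apply, Matrix.mulVec, dotProduct, Matrix.transpose_apply, mul_comm]

lemma CA.det_rows_mulVec {M : Matrix (Fin 3) (Fin 3) ℝ} (hdet : M.det = 1) (p q r : Fin 3 → ℝ) :
    Matrix.det ![M *ᵥ p, M *ᵥ q, M *ᵥ r] = Matrix.det ![p, q, r] := by
  have h : Matrix.det (Matrix.of ![p, q, r] * Mᵀ) = Matrix.det ![p, q, r] := by
    rw [Matrix.det_mul, Matrix.det_transpose, hdet, mul_one]; rfl
  rw [← h, CA.rows_mul]; rfl

lemma CA.cross_preserved {M : Matrix (Fin 3) (Fin 3) ℝ} (h : M * Mᵀ = 1) (hdet : M.det = 1)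
    (a b : Fin 3 → ℝ) : M *ᵥ (a ⨯₃ b) = (M *ᵥ a) ⨯₃ (M *ᵥ b) := by
  set z := (M *ᵥ a) ⨯₃ (M *ᵥ b) with hzdef
  have key : ∀ w : Fin 3 → ℝ, (M *ᵥ w) ⬝ᵥ z = w ⬝ᵥ (a ⨯₃ b) := by
    intro w
    rw [hzdef, triple_product_eq_det, CA.det_rows_mulVec hdet, ← triple_product_eq_det]
  have hz : Mᵀ *ᵥ z = a ⨯₃ b := by
    funext j
    have h1 := key (Pi.single j 1)
    rw [single_dotProduct, one_mul] at h1
    rw [← h1, Matrix.mulVec_single_one]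
    simp [Matrix.mulVec, dotProduct, Matrix.transpose_apply]
  calc M *ᵥ (a ⨯₃ b) = M *ᵥ (Mᵀ *ᵥ z) := by rw [hz]
    _ = (M * Mᵀ) *ᵥ z := by rw [Matrix.mulVec_mulVec]
    _ = z := by rw [h, Matrix.one_mulVec]

lemma CA.dot_sub_smul (v u : Fin 3 → ℝ) (k : ℝ) :
    (v - k • u) ⬝ᵥ (v - k • u) = v ⬝ᵥ v - 2 * k * (u ⬝ᵥ v) + k ^ 2 * (u ⬝ᵥ u) := by
  simp [dotProduct_sub, sub_dotProduct, dotProduct_smul,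
    smul_dotProduct, dotProduct_comm v u, smul_eq_mul]
  ring

lemma CA.strict_cs {u v : Fin 3 → ℝ} (hLI : LinearIndependent ℝ ![u, v]) :
    (u ⬝ᵥ v) ^ 2 < (u ⬝ᵥ u) * (v ⬝ᵥ v) := by
  have hc := crossProduct_ne_zero_iff_linearIndependent.mpr hLI
  have h := CA.dot_self_pos hc
  rw [cross_dot_cross, dotProduct_comm v u] at h
  nlinarith [h]

theorem CA.aux (x₀ u v : Fin 3 → ℝ) (hLI : LinearIndependent ℝ ![u, v]) :
    ∃! p : Matrix.specialOrthogonalGroup (Fin 3) ℝ × (Fin 3 → ℝ),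
      Matrix.mulVec (p.1 : Matrix (Fin 3) (Fin 3) ℝ) x₀ + p.2 = 0 ∧
      Matrix.mulVec (p.1 : Matrix (Fin 3) (Fin 3) ℝ) (x₀ + u) + p.2 =
        ![Real.sqrt (u ⬝ᵥ u), 0, 0] ∧
      Matrix.mulVec (p.1 : Matrix (Fin 3) (Fin 3) ℝ) (x₀ + v) + p.2 =
        ![u ⬝ᵥ v / Real.sqrt (u ⬝ᵥ u),
          Real.sqrt (v ⬝ᵥ v - (u ⬝ᵥ v) ^ 2 / (u ⬝ᵥ u)), 0] := by
  have hcs := CA.strict_cs hLI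
  set N1 := u ⬝ᵥ u with hN1def
  set N2 := v ⬝ᵥ v with hN2def
  set d := u ⬝ᵥ v with hddef
  have hN1nn : 0 ≤ N1 := by
    rw [hN1def, show u ⬝ᵥ u = ∑ i, u i * u i from rfl]
    exact Finset.sum_nonneg fun i _ => mul_self_nonneg _
  have hN2nn : 0 ≤ N2 := by
    rw [hN2def, show v ⬝ᵥ v = ∑ i, v i * v i from rfl]
    exact Finset.sum_nonneg fun i _ => mul_self_nonneg _
  have hN1 : 0 < N1 := by by_contra hc; push_neg at hc; nlinarith [sq_nonneg d]
  have hN2 : 0 < N2 := by by_contra hc; push_neg at hc; nlinarith [sq_nonneg d]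
  set L1 := Real.sqrt N1 with hL1def
  have hL1pos : 0 < L1 := Real.sqrt_pos.mpr hN1
  have hL1sq : L1 ^ 2 = N1 := Real.sq_sqrt hN1nn
  have hs2pos : 0 < N2 - d ^ 2 / N1 := by
    rw [sub_pos, div_lt_iff₀ hN1]; nlinarith
  set s := Real.sqrt (N2 - d ^ 2 / N1) with hsdef
  have hspos : 0 < s := Real.sqrt_pos.mpr hs2pos
  have hssq : s ^ 2 = N2 - d ^ 2 / N1 := Real.sq_sqrt hs2pos.le
  set r₁ : Fin 3 → ℝ := L1⁻¹ • u with hr1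
  set r₂ : Fin 3 → ℝ := s⁻¹ • (v - (d / N1) • u) with hr2
  set r₃ : Fin 3 → ℝ := r₁ ⨯₃ r₂ with hr3
  -- dot product table
  have h11 : r₁ ⬝ᵥ r₁ = 1 := by
    rw [hr1, smul_dotProduct, dotProduct_smul, ← hN1def, smul_eq_mul,
      smul_eq_mul, ← hL1sq]
    field_simp
  have h12 : r₁ ⬝ᵥ r₂ = 0 := by
    rw [hr1, hr2, smul_dotProduct, dotProduct_smul, dotProduct_sub,
      dotProduct_smul, ← hN1def, ← hddef, smul_eq_mul, smul_eq_mul, smul_eq_mul]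
    field_simp
    ring
  have h21 : r₂ ⬝ᵥ r₁ = 0 := by rw [dotProduct_comm]; exact h12
  have h22 : r₂ ⬝ᵥ r₂ = 1 := by
    rw [hr2, smul_dotProduct, dotProduct_smul, CA.dot_sub_smul, ← hN1def,
      ← hN2def, ← hddef, smul_eq_mul, smul_eq_mul]
    have hinner : N2 - 2 * (d / N1) * d + (d / N1) ^ 2 * N1 = s ^ 2 := by
      rw [hssq]; field_simp; ring
    rw [hinner]
    field_simp
  have h13 : r₁ ⬝ᵥ r₃ = 0 := by rw [hr3]; exact dot_self_cross r₁ r₂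
  have h23 : r₂ ⬝ᵥ r₃ = 0 := by rw [hr3]; exact dot_cross_self r₁ r₂
  have h31 : r₃ ⬝ᵥ r₁ = 0 := by rw [dotProduct_comm]; exact h13
  have h32 : r₃ ⬝ᵥ r₂ = 0 := by rw [dotProduct_comm]; exact h23
  have h33 : r₃ ⬝ᵥ r₃ = 1 := by
    rw [hr3, cross_dot_cross, h11, h22, h12, h21]; ring
  set A : Matrix (Fin 3) (Fin 3) ℝ := Matrix.of ![r₁, r₂, r₃] with hA
  have hAapp : ∀ x : Fin 3 → ℝ, A *ᵥ x = ![r₁ ⬝ᵥ x, r₂ ⬝ᵥ x, r₃ ⬝ᵥ x] := by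
    intro x
    funext j
    fin_cases j <;> simp [hA, Matrix.mulVec, dotProduct]
  have horth : A * Aᵀ = 1 := by
    have e11 := h11; have e12 := h12; have e13 := h13
    have e21 := h21; have e22 := h22; have e23 := h23
    have e31 := h31; have e32 := h32; have e33 := h33
    simp [dotProduct, Fin.sum_univ_three] at e11 e12 e13 e21 e22 e23 e31 e32 e33
    ext i j
    rw [show (A * Aᵀ) i j = A i ⬝ᵥ A j from rfl]
    fin_cases i <;> fin_cases j <;>
      simp [hA, Matrix.one_apply, dotProduct, Fin.sum_univ_three, e11, e12, e13, e21, e22, e23, e31, e32, e33]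
  have hdetA : A.det = 1 := by
    rw [show A.det = r₁ ⬝ᵥ r₂ ⨯₃ r₃ from (triple_product_eq_det r₁ r₂ r₃).symm,
      triple_product_permutation, triple_product_permutation, ← hr3, h33]
  have hmem : A ∈ Matrix.specialOrthogonalGroup (Fin 3) ℝ := by
    rw [Matrix.mem_specialOrthogonalGroup_iff]
    refine ⟨Matrix.mem_orthogonalGroup_iff _ _ |>.mpr ?_, hdetA⟩
    exact horth
  -- mulVec identities
  have hu' : u = L1 • r₁ := by
    rw [hr1, smul_smul, mul_inv_cancel₀ hL1pos.ne', one_smul]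
  have hv' : v = s • r₂ + (d / L1) • r₁ := by
    rw [hr1, hr2, smul_smul, smul_smul, mul_inv_cancel₀ hspos.ne', one_smul]
    rw [show d / L1 * L1⁻¹ = d / N1 by rw [← hL1sq]; ring]
    abel
  have hAu : A *ᵥ u = ![L1, 0, 0] := by
    rw [hAapp]
    have e1 : r₁ ⬝ᵥ u = L1 := by
      rw [hr1, smul_dotProduct, ← hN1def, smul_eq_mul, ← hL1sq]
      field_simp
    have e2 : r₂ ⬝ᵥ u = 0 := by
      rw [hr2, smul_dotProduct, sub_dotProduct, smul_dotProduct,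
        dotProduct_comm v u, ← hN1def, ← hddef, smul_eq_mul, smul_eq_mul]
      field_simp
      ring
    have e3 : r₃ ⬝ᵥ u = 0 := by
      rw [dotProduct_comm, hu', smul_dotProduct, hr3]
      rw [dot_self_cross, smul_eq_mul, mul_zero]
    rw [e1, e2, e3]
  have hAv : A *ᵥ v = ![d / L1, s, 0] := by
    rw [hAapp]
    have e1 : r₁ ⬝ᵥ v = d / L1 := by
      rw [hr1, smul_dotProduct, ← hddef, smul_eq_mul]
      field_simp
    have e2 : r₂ ⬝ᵥ v = s := by
      rw [hr2, smul_dotProduct, sub_dotProduct, smul_dotProduct,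
        ← hN2def, ← hddef, smul_eq_mul, smul_eq_mul]
      have : N2 - d / N1 * d = s ^ 2 := by rw [hssq]; ring
      rw [this, sq]
      field_simp
    have e3 : r₃ ⬝ᵥ v = 0 := by
      rw [dotProduct_comm, hv', add_dotProduct,
        smul_dotProduct s r₂ r₃, smul_dotProduct (d / L1) r₁ r₃, hr3]
      rw [dot_self_cross, dot_cross_self, smul_eq_mul, smul_eq_mul, mul_zero, mul_zero,
        add_zero]
    rw [e1, e2, e3]
  -- assemble
  refine ⟨⟨⟨A, hmem⟩, -(A *ᵥ x₀)⟩, ⟨?_, ?_, ?_⟩, ?_⟩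
  · show A *ᵥ x₀ + -(A *ᵥ x₀) = 0
    exact add_neg_cancel _
  · show A *ᵥ (x₀ + u) + -(A *ᵥ x₀) = ![L1, 0, 0]
    rw [Matrix.mulVec_add, hAu]
    abel
  · show A *ᵥ (x₀ + v) + -(A *ᵥ x₀) = ![d / L1, s, 0]
    rw [Matrix.mulVec_add, hAv]
    abel
  · rintro ⟨B, D⟩ ⟨hb0, hb1, hb2⟩
    set Mb : Matrix (Fin 3) (Fin 3) ℝ := (B : Matrix (Fin 3) (Fin 3) ℝ) with hMb
    have hBmem := B.2
    rw [Matrix.mem_specialOrthogonalGroup_iff] at hBmem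
    obtain ⟨hBo, hBdet⟩ := hBmem
    rw [Matrix.mem_orthogonalGroup_iff] at hBo
    have hBorth : Mb * Mbᵀ = 1 := by
      rw [show Mbᵀ = star Mb from rfl]
      exact hBo
    have hD : D = -(Mb *ᵥ x₀) := eq_neg_of_add_eq_zero_right hb0
    rw [Matrix.mulVec_add] at hb1 hb2
    have hBu : Mb *ᵥ u = ![L1, 0, 0] := by
      calc Mb *ᵥ u = Mb *ᵥ x₀ + Mb *ᵥ u + D - (Mb *ᵥ x₀ + D) := by abel
        _ = ![L1, 0, 0] - 0 := by rw [hb1, hb0]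
        _ = ![L1, 0, 0] := sub_zero _
    have hBv : Mb *ᵥ v = ![d / L1, s, 0] := by
      calc Mb *ᵥ v = Mb *ᵥ x₀ + Mb *ᵥ v + D - (Mb *ᵥ x₀ + D) := by abel
        _ = ![d / L1, s, 0] - 0 := by rw [hb2, hb0]
        _ = ![d / L1, s, 0] := sub_zero _
    have hBc : Mb *ᵥ (u ⨯₃ v) = ![L1, 0, 0] ⨯₃ ![d / L1, s, 0] := by
      rw [CA.cross_preserved hBorth hBdet, hBu, hBv]
    have hAc : A *ᵥ (u ⨯₃ v) = ![L1, 0, 0] ⨯₃ ![d / L1, s, 0] := by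
      rw [CA.cross_preserved horth hdetA, hAu, hAv]
    have hNA : (Matrix.of ![u, v, u ⨯₃ v]) * Mbᵀ = (Matrix.of ![u, v, u ⨯₃ v]) * Aᵀ := by
      rw [CA.rows_mul, CA.rows_mul, hBu, hBv, hBc, hAu, hAv, hAc]
    have hdetN : (Matrix.of ![u, v, u ⨯₃ v]).det ≠ 0 := by
      have h1 : Matrix.det ![u, v, u ⨯₃ v] = (u ⨯₃ v) ⬝ᵥ (u ⨯₃ v) := by
        rw [← triple_product_eq_det, triple_product_permutation, triple_product_permutation]
      rw [show (Matrix.of ![u, v, u ⨯₃ v]).det = Matrix.det ![u, v, u ⨯₃ v] from rfl, h1]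
      exact (CA.dot_self_pos (crossProduct_ne_zero_iff_linearIndependent.mpr hLI)).ne'
    have hinv : IsUnit (Matrix.of ![u, v, u ⨯₃ v]).det := isUnit_iff_ne_zero.mpr hdetN
    have hMbA : Mb = A := by
      have h2 : Mbᵀ = Aᵀ := by
        have h3 : (Matrix.of ![u, v, u ⨯₃ v])⁻¹ * (Matrix.of ![u, v, u ⨯₃ v] * Mbᵀ) =
            (Matrix.of ![u, v, u ⨯₃ v])⁻¹ * (Matrix.of ![u, v, u ⨯₃ v] * Aᵀ) := by rw [hNA]
        rwa [← Matrix.mul_assoc, ← Matrix.mul_assoc, Matrix.nonsing_inv_mul _ hinv,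
          Matrix.one_mul, Matrix.one_mul] at h3
      calc Mb = Mbᵀᵀ := (Matrix.transpose_transpose Mb).symm
        _ = Aᵀᵀ := by rw [h2]
        _ = A := Matrix.transpose_transpose A
    refine Prod.ext ?_ ?_
    · exact Subtype.ext (hMb.symm.trans hMbA)
    · show D = -(A *ᵥ x₀)
      rw [hD, hMbA]



/-- Canonical alignment: for affinely independent `x₀, x₁, x₂ ∈ ℝ³` there is a unique pair
`(A, D)` with `A ∈ SO(3)`, `D ∈ ℝ³` such that `A·x₀ + D = 0`, `A·x₁ + D = (L₁,0,0)` and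
`A·x₂ + D = (L₂ cos θ, L₂ sin θ, 0)`, where `L₁ = ‖x₁ − x₀‖`, `L₂ = ‖x₂ − x₀‖` (Euclidean
norms) and `θ ∈ (0,π)` is the angle between `x₁ − x₀` and `x₂ − x₀`. -/
theorem canonical_alignment_existsUnique (x₀ x₁ x₂ : Fin 3 → ℝ)
    (haff : AffineIndependent ℝ ![x₀, x₁, x₂]) :
    let L₁ : ℝ := Real.sqrt (∑ i, (x₁ i - x₀ i) ^ 2)
    let L₂ : ℝ := Real.sqrt (∑ i, (x₂ i - x₀ i) ^ 2)
    let θ : ℝ := Real.arccos ((∑ i, (x₁ i - x₀ i) * (x₂ i - x₀ i)) / (L₁ * L₂))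
    ∃! p : Matrix.specialOrthogonalGroup (Fin 3) ℝ × (Fin 3 → ℝ),
      Matrix.mulVec (p.1 : Matrix (Fin 3) (Fin 3) ℝ) x₀ + p.2 = 0 ∧
      Matrix.mulVec (p.1 : Matrix (Fin 3) (Fin 3) ℝ) x₁ + p.2 = ![L₁, 0, 0] ∧
      Matrix.mulVec (p.1 : Matrix (Fin 3) (Fin 3) ℝ) x₂ + p.2 =
        ![L₂ * Real.cos θ, L₂ * Real.sin θ, 0] := by
  intro L₁ L₂ θ
  set u : Fin 3 → ℝ := x₁ - x₀ with hu
  set v : Fin 3 → ℝ := x₂ - x₀ with hv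
  have hLI : LinearIndependent ℝ ![u, v] := by
    rw [LinearIndependent.pair_iff]
    intro a b hab
    rw [hu, hv] at hab
    have h := affineIndependent_iff.mp haff Finset.univ ![-(a + b), a, b] ?_ ?_
    · exact ⟨by simpa using h 1 (Finset.mem_univ 1), by simpa using h 2 (Finset.mem_univ 2)⟩
    · rw [Fin.sum_univ_three]
      simp
    · rw [Fin.sum_univ_three]
      have : (-(a + b)) • x₀ + a • x₁ + b • x₂ = a • (x₁ - x₀) + b • (x₂ - x₀) := by
        module
      simp only [Matrix.cons_val_zero, Matrix.cons_val_one, Matrix.head_cons,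
        Matrix.cons_val_two, Matrix.tail_cons]
      rw [this, hab]
  have eL1 : L₁ = Real.sqrt (u ⬝ᵥ u) := by
    rw [show L₁ = Real.sqrt (∑ i, (x₁ i - x₀ i) ^ 2) from rfl,
      show (∑ i, (x₁ i - x₀ i) ^ 2) = u ⬝ᵥ u from by
        simp [hu, dotProduct, Pi.sub_apply, sq]]
  have eL2 : L₂ = Real.sqrt (v ⬝ᵥ v) := by
    rw [show L₂ = Real.sqrt (∑ i, (x₂ i - x₀ i) ^ 2) from rfl,
      show (∑ i, (x₂ i - x₀ i) ^ 2) = v ⬝ᵥ v from by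
        simp [hv, dotProduct, Pi.sub_apply, sq]]
  have eθ : θ = Real.arccos ((u ⬝ᵥ v) / (L₁ * L₂)) := by
    rw [show θ = Real.arccos ((∑ i, (x₁ i - x₀ i) * (x₂ i - x₀ i)) / (L₁ * L₂)) from rfl,
      show (∑ i, (x₁ i - x₀ i) * (x₂ i - x₀ i)) = u ⬝ᵥ v from by
        simp [hu, hv, dotProduct, Pi.sub_apply]]
  have hcs := CA.strict_cs hLI
  have hN1nn : 0 ≤ u ⬝ᵥ u := by
    rw [show u ⬝ᵥ u = ∑ i, u i * u i from rfl]
    exact Finset.sum_nonneg fun i _ => mul_self_nonneg _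
  have hN2nn : 0 ≤ v ⬝ᵥ v := by
    rw [show v ⬝ᵥ v = ∑ i, v i * v i from rfl]
    exact Finset.sum_nonneg fun i _ => mul_self_nonneg _
  have hN1 : 0 < u ⬝ᵥ u := by
    by_contra hcon; push_neg at hcon; nlinarith [sq_nonneg (u ⬝ᵥ v)]
  have hN2 : 0 < v ⬝ᵥ v := by
    by_contra hcon; push_neg at hcon; nlinarith [sq_nonneg (u ⬝ᵥ v)]
  have hL1pos : 0 < L₁ := by rw [eL1]; exact Real.sqrt_pos.mpr hN1
  have hL2pos : 0 < L₂ := by rw [eL2]; exact Real.sqrt_pos.mpr hN2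
  have hL1sq : L₁ ^ 2 = u ⬝ᵥ u := by rw [eL1]; exact Real.sq_sqrt hN1nn
  have hL2sq : L₂ ^ 2 = v ⬝ᵥ v := by rw [eL2]; exact Real.sq_sqrt hN2nn
  have hccsq : ((u ⬝ᵥ v) / (L₁ * L₂)) ^ 2 < 1 := by
    rw [div_pow, mul_pow, hL1sq, hL2sq, div_lt_one (by positivity)]
    exact hcs
  have hcos : Real.cos θ = (u ⬝ᵥ v) / (L₁ * L₂) := by
    rw [eθ]
    exact Real.cos_arccos
      (by nlinarith [sq_nonneg ((u ⬝ᵥ v) / (L₁ * L₂) + 1)])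
      (by nlinarith [sq_nonneg ((u ⬝ᵥ v) / (L₁ * L₂) - 1)])
  have hsin : Real.sin θ = Real.sqrt (1 - ((u ⬝ᵥ v) / (L₁ * L₂)) ^ 2) := by
    rw [eθ]; exact Real.sin_arccos _
  have eA : L₂ * Real.cos θ = (u ⬝ᵥ v) / Real.sqrt (u ⬝ᵥ u) := by
    rw [hcos, ← eL1, ← div_div, mul_comm, div_mul_cancel₀ _ hL2pos.ne']
  have eB : L₂ * Real.sin θ = Real.sqrt (v ⬝ᵥ v - (u ⬝ᵥ v) ^ 2 / (u ⬝ᵥ u)) := by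
    rw [hsin]
    have h1 : L₂ * Real.sqrt (1 - ((u ⬝ᵥ v) / (L₁ * L₂)) ^ 2) =
        Real.sqrt ((v ⬝ᵥ v) * (1 - ((u ⬝ᵥ v) / (L₁ * L₂)) ^ 2)) := by
      rw [Real.sqrt_mul hN2nn, ← eL2]
    rw [h1]
    congr 1
    rw [div_pow, mul_pow, hL1sq, hL2sq, mul_sub, mul_one, ← div_div]
    congr 1
    rw [mul_comm, div_mul_cancel₀ _ hN2.ne']
  have hx1 : x₀ + u = x₁ := by rw [hu]; abel
  have hx2 : x₀ + v = x₂ := by rw [hv]; abel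
  have haux := CA.aux x₀ u v hLI
  rw [hx1, hx2, ← eA, ← eB, ← eL1] at haux
  exact haux
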